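/- Let i, j ≥ k+2. Then the k-defective Ramsey number for cographs equals 1 + ((i−1)(j−1) − {i−1}{j−1})/(k+1), where {x} denotes x mod (k+1). -/

import Mathlib

open SimpleGraph

/-- A set `S` of vertices is `k`-sparse in `G` if every vertex of `S` has at most `k`
neighbors inside `S`. -/
def KSparse {V : Type*} (G : SimpleGraph V) (k : ℕ) (S : Set V) : Prop :=
  ∀ v ∈ S, ({u ∈ S | G.Adj v u}).ncard ≤ k

/-- A set is `k`-dense in `G` if it is `k`-sparse in the complement of `G`. -/
def KDense {V : Type*} (G : SimpleGraph V) (k : ℕ) (S : Set V) : Prop :=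
  KSparse Gᶜ k S

/-- `G` has a `k`-dense set of size `i`. -/
def HasKDense {V : Type*} (G : SimpleGraph V) (k i : ℕ) : Prop :=
  ∃ D : Set V, D.ncard = i ∧ KDense G k D

/-- `G` has a `k`-sparse set of size `j`. -/
def HasKSparse {V : Type*} (G : SimpleGraph V) (k j : ℕ) : Prop :=
  ∃ S : Set V, S.ncard = j ∧ KSparse G k S

/-- A cactus: every edge lies on at most one cycle, i.e. any two cycles sharing
an edge have the same edge set. -/
def IsCactus {V : Type*} (G : SimpleGraph V) : Prop :=
  ∀ (u v : V) (c₁ : G.Walk u u) (c₂ : G.Walk v v), c₁.IsCycle → c₂.IsCycle →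
    (∃ e, e ∈ c₁.edges ∧ e ∈ c₂.edges) → (∀ e, e ∈ c₁.edges ↔ e ∈ c₂.edges)

/-- A split graph: the vertices partition into a clique and an independent set. -/
def IsSplit {V : Type*} (G : SimpleGraph V) : Prop :=
  ∃ K : Set V, G.IsClique K ∧ Gᶜ.IsClique Kᶜ

/-- A cograph: no induced path on four vertices. -/
def IsCograph {V : Type*} (G : SimpleGraph V) : Prop :=
  ¬ ∃ f : Fin 4 ↪ V, ∀ a b : Fin 4, G.Adj (f a) (f b) ↔ (SimpleGraph.pathGraph 4).Adj a b

namespace DR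

lemma ksparse_mono {V : Type*} {G : SimpleGraph V} {c : ℕ} {S S' : Set V}
    (hS : S.Finite) (hsub : S' ⊆ S) (h : KSparse G c S) : KSparse G c S' := by
  intro v hv
  refine le_trans (Set.ncard_le_ncard ?_ (hS.subset (fun u hu => hu.1))) (h v (hsub hv))
  exact fun u hu => ⟨hsub hu.1, hu.2⟩

lemma ksparse_of_small {V : Type*} {G : SimpleGraph V} {c : ℕ} {S : Set V}
    (hS : S.Finite) (h : S.ncard ≤ c + 1) : KSparse G c S := by
  intro v hv
  have hsub : {u ∈ S | G.Adj v u} ⊆ S \ {v} := by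
    intro u hu
    exact ⟨hu.1, by rintro rfl; exact G.irrefl hu.2⟩
  refine le_trans (Set.ncard_le_ncard hsub hS.diff) ?_
  rw [Set.ncard_diff_singleton_of_mem hv]
  omega

/-- transfer of sparseness along an injective map preserving adjacency on `S`. -/
lemma ksparse_image {V W : Type*} {G : SimpleGraph V} {H : SimpleGraph W}
    (e : V → W) (he : Function.Injective e) {S : Set V} {c : ℕ}
    (hadj : ∀ u ∈ S, ∀ v ∈ S, (H.Adj (e u) (e v) ↔ G.Adj u v))
    (h : KSparse G c S) : KSparse H c (e '' S) := by
  rintro w ⟨v, hv, rfl⟩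
  have hset : {u ∈ e '' S | H.Adj (e v) u} = e '' {u ∈ S | G.Adj v u} := by
    ext w
    constructor
    · rintro ⟨⟨u, hu, rfl⟩, hadj'⟩
      exact ⟨u, ⟨hu, (hadj v hv u hu).1 hadj'⟩, rfl⟩
    · rintro ⟨u, ⟨hu, hadj'⟩, rfl⟩
      exact ⟨⟨u, hu, rfl⟩, (hadj v hv u hu).2 hadj'⟩
  rw [hset, Set.ncard_image_of_injective _ he]
  exact h v hv

lemma ncard_image_inj {V W : Type*} (e : V → W) (he : Function.Injective e) (S : Set V) :
    (e '' S).ncard = S.ncard := Set.ncard_image_of_injective _ he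

end DR

namespace DR

variable {α β : Type*}

/-- Disjoint union of simple graphs. -/
def unionG (G : SimpleGraph α) (H : SimpleGraph β) : SimpleGraph (α ⊕ β) where
  Adj x y := match x, y with
    | .inl a, .inl b => G.Adj a b
    | .inr a, .inr b => H.Adj a b
    | _, _ => False
  symm := ⟨by rintro (a|a) (b|b) h <;> simp_all <;> exact h.symm⟩
  loopless := ⟨by rintro (a|a) h <;> exact SimpleGraph.irrefl _ h⟩

/-- Join of simple graphs. -/
def joinG (G : SimpleGraph α) (H : SimpleGraph β) : SimpleGraph (α ⊕ β) :=
  (unionG Gᶜ Hᶜ)ᶜ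

@[simp] lemma unionG_adj_ll {G : SimpleGraph α} {H : SimpleGraph β} {a b : α} :
    (unionG G H).Adj (.inl a) (.inl b) ↔ G.Adj a b := Iff.rfl
@[simp] lemma unionG_adj_rr {G : SimpleGraph α} {H : SimpleGraph β} {a b : β} :
    (unionG G H).Adj (.inr a) (.inr b) ↔ H.Adj a b := Iff.rfl
@[simp] lemma unionG_adj_lr {G : SimpleGraph α} {H : SimpleGraph β} {a : α} {b : β} :
    ¬ (unionG G H).Adj (.inl a) (.inr b) := fun h => h
@[simp] lemma unionG_adj_rl {G : SimpleGraph α} {H : SimpleGraph β} {a : β} {b : α} :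
    ¬ (unionG G H).Adj (.inr a) (.inl b) := fun h => h

@[simp] lemma unionG_compl_ll {G : SimpleGraph α} {H : SimpleGraph β} {a b : α} :
    (unionG G H)ᶜ.Adj (.inl a) (.inl b) ↔ Gᶜ.Adj a b := by
  simp [SimpleGraph.compl_adj, Sum.inl_injective.ne_iff]
@[simp] lemma unionG_compl_rr {G : SimpleGraph α} {H : SimpleGraph β} {a b : β} :
    (unionG G H)ᶜ.Adj (.inr a) (.inr b) ↔ Hᶜ.Adj a b := by
  simp [SimpleGraph.compl_adj, Sum.inr_injective.ne_iff]
@[simp] lemma unionG_compl_lr {G : SimpleGraph α} {H : SimpleGraph β} {a : α} {b : β} :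
    (unionG G H)ᶜ.Adj (.inl a) (.inr b) := by
  simp [SimpleGraph.compl_adj]
@[simp] lemma unionG_compl_rl {G : SimpleGraph α} {H : SimpleGraph β} {a : β} {b : α} :
    (unionG G H)ᶜ.Adj (.inr a) (.inl b) := by
  simp [SimpleGraph.compl_adj]

section SetPlumbing

lemma sum_set_decomp (S : Set (α ⊕ β)) :
    S = Sum.inl '' (Sum.inl ⁻¹' S) ∪ Sum.inr '' (Sum.inr ⁻¹' S) := by
  ext (x|x) <;> simp

lemma sum_set_ncard [Fintype α] [Fintype β] (S : Set (α ⊕ β)) :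
    S.ncard = (Sum.inl ⁻¹' S).ncard + (Sum.inr ⁻¹' S).ncard := by
  conv_lhs => rw [sum_set_decomp S]
  rw [Set.ncard_union_eq ?_ (Set.toFinite _) (Set.toFinite _),
    Set.ncard_image_of_injective _ Sum.inl_injective,
    Set.ncard_image_of_injective _ Sum.inr_injective]
  · rw [Set.disjoint_iff]
    rintro z ⟨⟨x, _, rfl⟩, ⟨y, _, h⟩⟩
    exact absurd h (by simp)

lemma count_union_inl {G : SimpleGraph α} {H : SimpleGraph β} (S : Set (α ⊕ β)) (a : α) :
    {u ∈ S | (unionG G H).Adj (.inl a) u} = Sum.inl '' {x ∈ Sum.inl ⁻¹' S | G.Adj a x} := by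
  ext (u|u) <;> simp

lemma count_union_inr {G : SimpleGraph α} {H : SimpleGraph β} (S : Set (α ⊕ β)) (a : β) :
    {u ∈ S | (unionG G H).Adj (.inr a) u} = Sum.inr '' {x ∈ Sum.inr ⁻¹' S | H.Adj a x} := by
  ext (u|u) <;> simp

lemma count_union_compl_inl [Fintype α] [Fintype β]
    {G : SimpleGraph α} {H : SimpleGraph β} (S : Set (α ⊕ β)) (a : α) :
    {u ∈ S | (unionG G H)ᶜ.Adj (.inl a) u}.ncard
      = {x ∈ Sum.inl ⁻¹' S | Gᶜ.Adj a x}.ncard + (Sum.inr ⁻¹' S).ncard := by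
  have hset : {u ∈ S | (unionG G H)ᶜ.Adj (.inl a) u}
      = Sum.inl '' {x ∈ Sum.inl ⁻¹' S | Gᶜ.Adj a x} ∪ Sum.inr '' (Sum.inr ⁻¹' S) := by
    ext (u|u) <;> simp <;> tauto
  rw [hset, Set.ncard_union_eq ?_ (Set.toFinite _) (Set.toFinite _),
    Set.ncard_image_of_injective _ Sum.inl_injective,
    Set.ncard_image_of_injective _ Sum.inr_injective]
  · rw [Set.disjoint_iff]
    rintro z ⟨⟨x, _, rfl⟩, ⟨y, _, h⟩⟩
    exact absurd h (by simp)

lemma count_union_compl_inr [Fintype α] [Fintype β]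
    {G : SimpleGraph α} {H : SimpleGraph β} (S : Set (α ⊕ β)) (a : β) :
    {u ∈ S | (unionG G H)ᶜ.Adj (.inr a) u}.ncard
      = {x ∈ Sum.inr ⁻¹' S | Hᶜ.Adj a x}.ncard + (Sum.inl ⁻¹' S).ncard := by
  have hset : {u ∈ S | (unionG G H)ᶜ.Adj (.inr a) u}
      = Sum.inr '' {x ∈ Sum.inr ⁻¹' S | Hᶜ.Adj a x} ∪ Sum.inl '' (Sum.inl ⁻¹' S) := by
    ext (u|u) <;> simp [or_comm] <;> tauto
  rw [hset, Set.ncard_union_eq ?_ (Set.toFinite _) (Set.toFinite _),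
    Set.ncard_image_of_injective _ Sum.inl_injective,
    Set.ncard_image_of_injective _ Sum.inr_injective]
  · rw [Set.disjoint_iff]
    rintro z ⟨⟨x, _, rfl⟩, ⟨y, _, h⟩⟩
    exact absurd h (by simp)

end SetPlumbing

end DR

namespace DR

section Profiles
variable {α β : Type*} [Fintype α] [Fintype β]

/-- sparseness profile bound: any `c`-sparse set (`c ≤ k`) has at most `f c` elements. -/
def SP (k : ℕ) (G : SimpleGraph α) (f : ℕ → ℕ) : Prop :=
  ∀ c, c ≤ k → ∀ S : Set α, KSparse G c S → S.ncard ≤ f c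

def DN (k : ℕ) (G : SimpleGraph α) (f : ℕ → ℕ) : Prop := SP k Gᶜ f

lemma SP_mono {k : ℕ} {G : SimpleGraph α} {f g : ℕ → ℕ} (h : SP k G f)
    (hfg : ∀ c, c ≤ k → f c ≤ g c) : SP k G g :=
  fun c hc S hS => le_trans (h c hc S hS) (hfg c hc)

lemma SP_card {k : ℕ} (G : SimpleGraph α) : SP k G (fun _ => Fintype.card α) := by
  intro c _ S _
  have := Set.ncard_le_ncard (Set.subset_univ S) (Set.toFinite _)
  rwa [Set.ncard_univ, Nat.card_eq_fintype_card] at this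

lemma SP_top {k : ℕ} : SP k (⊤ : SimpleGraph α) (fun c => c + 1) := by
  intro c _ S hS
  rcases Set.eq_empty_or_nonempty S with rfl | ⟨v, hv⟩
  · simp
  · have := hS v hv
    have hset : {u ∈ S | (⊤ : SimpleGraph α).Adj v u} = S \ {v} := by
      ext u
      simp only [SimpleGraph.top_adj, Set.mem_setOf_eq, Set.mem_diff, Set.mem_singleton_iff]
      constructor
      · rintro ⟨h1, h2⟩; exact ⟨h1, fun h => h2 (h ▸ rfl)⟩
      · rintro ⟨h1, h2⟩; exact ⟨h1, fun h => h2 h.symm⟩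
    rw [hset, Set.ncard_diff_singleton_of_mem hv] at this
    have hS1 : 0 < S.ncard := (Set.ncard_pos (Set.toFinite _)).2 ⟨v, hv⟩
    simp only []
    omega

lemma DN_bot {k : ℕ} : DN k (⊥ : SimpleGraph α) (fun c => c + 1) := by
  unfold DN
  rw [compl_bot]
  exact SP_top

/-- union: sparse profiles add. -/
lemma SP_union {k : ℕ} {G : SimpleGraph α} {H : SimpleGraph β} {f g : ℕ → ℕ}
    (hG : SP k G f) (hH : SP k H g) : SP k (unionG G H) (fun c => f c + g c) := by
  intro c hc S hS
  rw [sum_set_ncard S]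
  have h1 : KSparse G c (Sum.inl ⁻¹' S) := by
    intro a ha
    have := hS (.inl a) ha
    rw [count_union_inl, Set.ncard_image_of_injective _ Sum.inl_injective] at this
    exact this
  have h2 : KSparse H c (Sum.inr ⁻¹' S) := by
    intro a ha
    have := hS (.inr a) ha
    rw [count_union_inr, Set.ncard_image_of_injective _ Sum.inr_injective] at this
    exact this
  exact Nat.add_le_add (hG c hc _ h1) (hH c hc _ h2)

/-- union: dense cross bound, linear profile version. -/
lemma DN_union_lin {k β' : ℕ} {G : SimpleGraph α} {H : SimpleGraph β} {f g : ℕ → ℕ}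
    (hG : DN k G f) (hH : DN k H g)
    (hf : ∀ c, c ≤ k → f c ≤ β' + c + 1) (hg : ∀ c, c ≤ k → g c ≤ β' + c + 1) :
    DN k (unionG G H) (fun c => β' + c + 1) := by
  intro c hc S hS
  show S.ncard ≤ β' + c + 1
  rw [sum_set_ncard S]
  rcases Set.eq_empty_or_nonempty (Sum.inr ⁻¹' S) with h2e | ⟨b, hb⟩
  · -- S2 empty : S1 is c-dense in G
    have h1 : KSparse Gᶜ c (Sum.inl ⁻¹' S) := by
      intro a ha
      have := hS (.inl a) ha
      rw [count_union_compl_inl, h2e] at this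
      simpa using this
    have := hG c hc _ h1
    have := hf c hc
    simp only [h2e, Set.ncard_empty]
    omega
  · -- S2 nonempty: for each a ∈ S1 we get internal + |S2| ≤ c
    rcases Set.eq_empty_or_nonempty (Sum.inl ⁻¹' S) with h1e | ⟨a, ha⟩
    · have h2 : KSparse Hᶜ c (Sum.inr ⁻¹' S) := by
        intro a ha
        have := hS (.inr a) ha
        rw [count_union_compl_inr, h1e] at this
        simpa using this
      have := hH c hc _ h2
      have := hg c hc
      simp only [h1e, Set.ncard_empty]
      omega
    · have hy : (Sum.inr ⁻¹' S).ncard ≤ c := by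
        have := hS (.inl a) ha
        rw [count_union_compl_inl] at this
        omega
      have h1 : KSparse Gᶜ (c - (Sum.inr ⁻¹' S).ncard) (Sum.inl ⁻¹' S) := by
        intro a' ha'
        have := hS (.inl a') ha'
        rw [count_union_compl_inl] at this
        omega
      have := hG (c - (Sum.inr ⁻¹' S).ncard) (by omega) _ h1
      have := hf (c - (Sum.inr ⁻¹' S).ncard) (by omega)
      omega

/-- union: dense cross bound, capped version.  `G` is the big part (cap `Γ`),
`H` the small one (slope `γ`). -/
lemma DN_union_cap {k Γ γ : ℕ} {G : SimpleGraph α} {H : SimpleGraph β} {f g : ℕ → ℕ}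
    (hG : DN k G f) (hH : DN k H g)
    (hf : ∀ c, c ≤ k → f c ≤ Γ) (hg : ∀ c, c ≤ k → g c ≤ γ + c + 1)
    (hγ : γ + k + 1 ≤ Γ) :
    DN k (unionG G H) (fun _ => Γ) := by
  intro c hc S hS
  show S.ncard ≤ Γ
  rw [sum_set_ncard S]
  rcases Set.eq_empty_or_nonempty (Sum.inr ⁻¹' S) with h2e | ⟨b, hb⟩
  · have h1 : KSparse Gᶜ c (Sum.inl ⁻¹' S) := by
      intro a ha
      have := hS (.inl a) ha
      rw [count_union_compl_inl, h2e] at this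
      simpa using this
    have := hG c hc _ h1
    have := hf c hc
    simp only [h2e, Set.ncard_empty]
    omega
  · -- S2 nonempty: from b ∈ S2 : |S1| + internal ≤ c, so |S1| ≤ c and S2 is (c-|S1|)-dense
    have hx : (Sum.inl ⁻¹' S).ncard ≤ c := by
      have := hS (.inr b) hb
      rw [count_union_compl_inr] at this
      omega
    have h2 : KSparse Hᶜ (c - (Sum.inl ⁻¹' S).ncard) (Sum.inr ⁻¹' S) := by
      intro b' hb'
      have := hS (.inr b') hb'
      rw [count_union_compl_inr] at this
      omega
    have h2' := hH (c - (Sum.inl ⁻¹' S).ncard) (by omega) _ h2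
    have := hg (c - (Sum.inl ⁻¹' S).ncard) (by omega)
    omega

/-- join: dense profiles add. -/
lemma DN_join {k : ℕ} {G : SimpleGraph α} {H : SimpleGraph β} {f g : ℕ → ℕ}
    (hG : DN k G f) (hH : DN k H g) : DN k (joinG G H) (fun c => f c + g c) := by
  unfold DN joinG
  rw [compl_compl]
  exact SP_union hG hH

/-- join: sparse cross bound, capped version. -/
lemma SP_join_cap {k Γ γ : ℕ} {G : SimpleGraph α} {H : SimpleGraph β} {f g : ℕ → ℕ}
    (hG : SP k G f) (hH : SP k H g)
    (hf : ∀ c, c ≤ k → f c ≤ Γ) (hg : ∀ c, c ≤ k → g c ≤ γ + c + 1)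
    (hγ : γ + k + 1 ≤ Γ) :
    SP k (joinG G H) (fun _ => Γ) := by
  have h1 : DN k Gᶜ f := by unfold DN; rw [compl_compl]; exact hG
  have h2 : DN k Hᶜ g := by unfold DN; rw [compl_compl]; exact hH
  exact DN_union_cap h1 h2 hf hg hγ

end Profiles
end DR

namespace DR

section Cograph
variable {α β : Type*}

lemma path4_iff (a b : Fin 4) :
    (pathGraph 4).Adj a b ↔ (a.val + 1 = b.val ∨ b.val + 1 = a.val) := pathGraph_adj

/-- transfer cographness along an adjacency-preserving injection. -/
lemma cograph_of_inj {G : SimpleGraph α} {H : SimpleGraph β} (e : α → β)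
    (he : Function.Injective e) (hadj : ∀ u v, H.Adj (e u) (e v) ↔ G.Adj u v)
    (hH : IsCograph H) : IsCograph G := by
  rintro ⟨f, hf⟩
  refine hH ⟨⟨e ∘ f, he.comp f.injective⟩, fun a b => ?_⟩
  simp only [Function.Embedding.coeFn_mk, Function.comp_apply]
  rw [hadj, hf]

lemma cograph_compl {G : SimpleGraph α} (hG : IsCograph G) : IsCograph Gᶜ := by
  rintro ⟨f, hf⟩
  have key : ∀ x y : Fin 4, G.Adj (f x) (f y) ↔ (x ≠ y ∧ ¬ (pathGraph 4).Adj x y) := by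
    intro x y
    constructor
    · intro h
      have hne : f x ≠ f y := h.ne
      have hxy : x ≠ y := fun hh => hne (hh ▸ rfl)
      refine ⟨hxy, fun hp => ?_⟩
      have := (hf x y).2 hp
      rw [SimpleGraph.compl_adj] at this
      exact this.2 h
    · rintro ⟨hxy, hp⟩
      by_contra hadj
      have : Gᶜ.Adj (f x) (f y) := ⟨fun hh => hxy (f.injective hh), hadj⟩
      exact hp ((hf x y).1 this)
  let σ : Fin 4 → Fin 4 := ![1, 3, 0, 2]
  have hσ : Function.Injective σ := by decide
  refine hG ⟨⟨f ∘ σ, f.injective.comp hσ⟩, fun a b => ?_⟩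
  simp only [Function.Embedding.coeFn_mk, Function.comp_apply]
  rw [key, path4_iff, path4_iff]
  have hne : σ a ≠ σ b ↔ a ≠ b := hσ.ne_iff
  revert a b
  decide

lemma union_adj_isLeft {G : SimpleGraph α} {H : SimpleGraph β} {u v : α ⊕ β}
    (h : (unionG G H).Adj u v) : u.isLeft = v.isLeft := by
  rcases u with a | a <;> rcases v with b | b <;> simp_all

lemma cograph_union {G : SimpleGraph α} {H : SimpleGraph β}
    (hG : IsCograph G) (hH : IsCograph H) : IsCograph (unionG G H) := by
  rintro ⟨f, hf⟩
  have hadj : ∀ a b : Fin 4, (pathGraph 4).Adj a b → (unionG G H).Adj (f a) (f b) :=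
    fun a b h => (hf a b).2 h
  have h01 : (pathGraph 4).Adj 0 1 := (path4_iff 0 1).2 (by decide)
  have h12 : (pathGraph 4).Adj 1 2 := (path4_iff 1 2).2 (by decide)
  have h23 : (pathGraph 4).Adj 2 3 := (path4_iff 2 3).2 (by decide)
  have e01 := union_adj_isLeft (hadj 0 1 h01)
  have e12 := union_adj_isLeft (hadj 1 2 h12)
  have e23 := union_adj_isLeft (hadj 2 3 h23)
  have hall : ∀ t : Fin 4, (f t).isLeft = (f 0).isLeft := by
    intro t
    fin_cases t <;> simp_all
  cases hside : (f 0).isLeft with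
  | true =>
    have hex : ∀ t : Fin 4, ∃ a, f t = Sum.inl a := by
      intro t
      have := hall t
      rw [hside] at this
      exact Sum.isLeft_iff.1 this
    choose g hg using hex
    refine hG ⟨⟨g, fun s t hst => ?_⟩, fun a b => ?_⟩
    · exact f.injective (by rw [hg s, hg t, hst])
    · have : G.Adj (g a) (g b) ↔ (unionG G H).Adj (f a) (f b) := by
        rw [hg a, hg b]; exact Iff.rfl.symm
      exact this.trans (hf a b)
  | false =>
    have hex : ∀ t : Fin 4, ∃ a, f t = Sum.inr a := by
      intro t
      have h := hall t
      rw [hside] at h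
      rcases hft : f t with x | x
      · rw [hft] at h; simp at h
      · exact ⟨x, rfl⟩
    choose g hg using hex
    refine hH ⟨⟨g, fun s t hst => ?_⟩, fun a b => ?_⟩
    · exact f.injective (by rw [hg s, hg t, hst])
    · have : H.Adj (g a) (g b) ↔ (unionG G H).Adj (f a) (f b) := by
        rw [hg a, hg b]; exact Iff.rfl.symm
      exact this.trans (hf a b)

lemma cograph_bot : IsCograph (⊥ : SimpleGraph α) := by
  rintro ⟨f, hf⟩
  exact (hf 0 1).2 ((path4_iff 0 1).2 (by decide))

lemma cograph_top : IsCograph (⊤ : SimpleGraph α) := by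
  rintro ⟨f, hf⟩
  have h02 : ¬ (pathGraph 4).Adj 0 2 := by rw [path4_iff]; decide
  exact h02 ((hf 0 2).1 (f.injective.ne (by decide)))

lemma cograph_join {G : SimpleGraph α} {H : SimpleGraph β}
    (hG : IsCograph G) (hH : IsCograph H) : IsCograph (joinG G H) :=
  cograph_compl (cograph_union (cograph_compl hG) (cograph_compl hH))

end Cograph
end DR

namespace DR

section Construction

/-- vertex type for the inner (join) part of the extremal cograph -/
def InnerTy (D r s : ℕ) : ℕ → Type
  | 0 => (Fin D ⊕ Fin r) ⊕ Fin s
  | (t+1) => InnerTy D r s t ⊕ (Fin D ⊕ Fin s)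

instance instFinInner (D r s : ℕ) : (t : ℕ) → Fintype (InnerTy D r s t)
  | 0 => inferInstanceAs (Fintype (((Fin D ⊕ Fin r) ⊕ Fin s)))
  | (t+1) => letI := instFinInner D r s t
             inferInstanceAs (Fintype (InnerTy D r s t ⊕ (Fin D ⊕ Fin s)))

/-- `K_q` joined with an independent set of size `D` -/
def Yg (D q : ℕ) : SimpleGraph (Fin D ⊕ Fin q) :=
  joinG (⊥ : SimpleGraph (Fin D)) (⊤ : SimpleGraph (Fin q))

/-- `K_D` together with an independent set of size `s` -/
def Zg (D s : ℕ) : SimpleGraph (Fin D ⊕ Fin s) :=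
  unionG (⊤ : SimpleGraph (Fin D)) (⊥ : SimpleGraph (Fin s))

def innerG (D r s : ℕ) : (t : ℕ) → SimpleGraph (InnerTy D r s t)
  | 0 => unionG (Yg D r) (⊥ : SimpleGraph (Fin s))
  | (t+1) => joinG (innerG D r s t) (Zg D s)

def ETy (D r s ai q : ℕ) : ℕ → Type
  | 0 => InnerTy D r s ai
  | (t+1) => ETy D r s ai q t ⊕ (Fin D ⊕ Fin q)

instance instFinE (D r s ai q : ℕ) : (t : ℕ) → Fintype (ETy D r s ai q t)
  | 0 => inferInstanceAs (Fintype (InnerTy D r s ai))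
  | (t+1) => letI := instFinE D r s ai q t
             inferInstanceAs (Fintype (ETy D r s ai q t ⊕ (Fin D ⊕ Fin q)))

def EG (D r s ai q : ℕ) : (t : ℕ) → SimpleGraph (ETy D r s ai q t)
  | 0 => innerG D r s ai
  | (t+1) => unionG (EG D r s ai q t) (Yg D q)

lemma card_inner (D r s : ℕ) : ∀ t, Fintype.card (InnerTy D r s t) = (D + r + s) + t * (D + s)
  | 0 => by rw [Fintype.card_congr' (show InnerTy D r s 0 = ((Fin D ⊕ Fin r) ⊕ Fin s) from rfl)]; simp
  | (t+1) => by
      have ih := card_inner D r s t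
      rw [Fintype.card_congr' (show InnerTy D r s (t+1) = (InnerTy D r s t ⊕ (Fin D ⊕ Fin s)) from rfl)]
      rw [Fintype.card_sum, ih, Fintype.card_sum, Fintype.card_fin, Fintype.card_fin]
      ring

lemma card_E (D r s ai q : ℕ) :
    ∀ t, Fintype.card (ETy D r s ai q t) = ((D + r + s) + ai * (D + s)) + t * (D + q)
  | 0 => by simp only [ETy, instFinE, Nat.zero_mul, Nat.add_zero]; exact card_inner D r s ai
  | (t+1) => by
      have ih := card_E D r s ai q t
      rw [Fintype.card_congr' (show ETy D r s ai q (t+1) = (ETy D r s ai q t ⊕ (Fin D ⊕ Fin q)) from rfl)]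
      rw [Fintype.card_sum, ih, Fintype.card_sum, Fintype.card_fin, Fintype.card_fin]
      ring

variable {k : ℕ}

lemma DN_top_card {α : Type*} [Fintype α] : DN k (⊤ : SimpleGraph α) (fun _ => Fintype.card α) :=
  SP_card _

lemma SP_bot_card {α : Type*} [Fintype α] : SP k (⊥ : SimpleGraph α) (fun _ => Fintype.card α) :=
  SP_card _

lemma DN_Yg {D q : ℕ} (hD : D = k + 1) : DN k (Yg D q) (fun c => q + c + 1) := by
  have h := DN_join (DN_bot (k := k) (α := Fin D)) (DN_top_card (k := k) (α := Fin q))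
  refine SP_mono h (fun c _ => ?_)
  simp only [Fintype.card_fin]
  omega

lemma SP_Yg {D q : ℕ} (hD : D = k + 1) : SP k (Yg D q) (fun _ => D) := by
  refine SP_join_cap (γ := 0) (SP_bot_card (k := k) (α := Fin D)) SP_top (fun c _ => ?_) (fun c _ => ?_) ?_
  · simp
  · omega
  · omega

lemma DN_Zg {D s : ℕ} (hD : D = k + 1) : DN k (Zg D s) (fun _ => D) := by
  refine DN_union_cap (γ := 0) (DN_top_card (k := k) (α := Fin D)) (DN_bot (α := Fin s))
    (fun c _ => ?_) (fun c _ => ?_) ?_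
  · simp
  · omega
  · omega

lemma SP_Zg {D s : ℕ} (hD : D = k + 1) : SP k (Zg D s) (fun c => s + c + 1) := by
  have h := SP_union (SP_top (k := k) (α := Fin D)) (SP_bot_card (α := Fin s))
  refine SP_mono h (fun c _ => ?_)
  simp only [Fintype.card_fin]
  omega

lemma DN_inner {D r s : ℕ} (hD : D = k + 1) :
    ∀ t, DN k (innerG D r s t) (fun c => t * D + r + c + 1)
  | 0 => by
      have h := DN_union_lin (β' := r) (DN_Yg (q := r) hD) (DN_bot (k := k) (α := Fin s))
        (fun c _ => le_refl _) (fun c _ => by omega)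
      show DN k (unionG (Yg D r) (⊥ : SimpleGraph (Fin s))) _
      refine SP_mono h (fun c _ => by omega)
  | (t+1) => by
      have h := DN_join (DN_inner (r := r) (s := s) hD t) (DN_Zg (s := s) hD)
      show DN k (joinG (innerG D r s t) (Zg D s)) _
      refine SP_mono h (fun c _ => ?_)
      have : (t+1) * D = t * D + D := by ring
      omega

lemma SP_inner {D r s : ℕ} (hD : D = k + 1) (hs : s ≤ k) :
    ∀ t, SP k (innerG D r s t) (fun _ => D + s)
  | 0 => by
      have h := SP_union (SP_Yg (q := r) hD) (SP_bot_card (k := k) (α := Fin s))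
      show SP k (unionG (Yg D r) (⊥ : SimpleGraph (Fin s))) _
      refine SP_mono h (fun c _ => by simp only [Fintype.card_fin]; omega)
  | (t+1) => by
      show SP k (joinG (innerG D r s t) (Zg D s)) _
      refine SP_join_cap (γ := s) (SP_inner (r := r) hD hs t) (SP_Zg (s := s) hD)
        (fun c _ => le_refl _) (fun c _ => by omega) (by omega)

lemma DN_E {D r s ai q : ℕ} (hD : D = k + 1) (hq : q = ai * D + r) :
    ∀ t, DN k (EG D r s ai q t) (fun c => q + c + 1)
  | 0 => by
      have h := DN_inner (r := r) (s := s) hD ai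
      show DN k (innerG D r s ai) _
      refine SP_mono h (fun c _ => by omega)
  | (t+1) => by
      show DN k (unionG (EG D r s ai q t) (Yg D q)) _
      exact DN_union_lin (β' := q) (DN_E (r := r) (s := s) hD hq t) (DN_Yg (q := q) hD)
        (fun c _ => le_refl _) (fun c _ => le_refl _)

lemma SP_E {D r s ai q : ℕ} (hD : D = k + 1) (hs : s ≤ k) :
    ∀ t, SP k (EG D r s ai q t) (fun _ => (D + s) + t * D)
  | 0 => by
      have h := SP_inner (r := r) hD hs ai
      show SP k (innerG D r s ai) _
      refine SP_mono h (fun c _ => by omega)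
  | (t+1) => by
      have h := SP_union (SP_E (r := r) (ai := ai) (q := q) hD hs t) (SP_Yg (q := q) hD)
      show SP k (unionG (EG D r s ai q t) (Yg D q)) _
      refine SP_mono h (fun c _ => ?_)
      have : (t+1) * D = t * D + D := by ring
      omega

lemma cograph_inner (D r s : ℕ) : ∀ t, IsCograph (innerG D r s t)
  | 0 => cograph_union (cograph_join cograph_bot cograph_top) cograph_bot
  | (t+1) => cograph_join (cograph_inner D r s t) (cograph_union cograph_top cograph_bot)

lemma cograph_E (D r s ai q : ℕ) : ∀ t, IsCograph (EG D r s ai q t)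
  | 0 => cograph_inner D r s ai
  | (t+1) => cograph_union (cograph_E D r s ai q t) (cograph_join cograph_bot cograph_top)

end Construction
end DR

namespace DR

lemma compl_comap_equiv {V W : Type*} (e : V ≃ W) (G : SimpleGraph W) :
    (G.comap ⇑e)ᶜ = Gᶜ.comap ⇑e := by
  ext u v
  simp [SimpleGraph.compl_adj, e.injective.ne_iff]

lemma lower_main (k i j : ℕ) (hi : k + 2 ≤ i) (hj : k + 2 ≤ j) :
    ∃ G : SimpleGraph
        (Fin (((i - 1) * (j - 1) - (i - 1) % (k + 1) * ((j - 1) % (k + 1))) / (k + 1))),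
      IsCograph G ∧ ¬ HasKDense G k i ∧ ¬ HasKSparse G k j := by
  obtain ⟨A, hA⟩ : ∃ A, (i - 1) / (k + 1) = A + 1 := by
    refine ⟨(i - 1) / (k + 1) - 1, ?_⟩
    have h1 : (k + 1) * 1 ≤ i - 1 := by omega
    have := (Nat.le_div_iff_mul_le (by omega : 0 < k + 1)).2 (by omega : 1 * (k+1) ≤ i - 1)
    omega
  obtain ⟨B, hB⟩ : ∃ B, (j - 1) / (k + 1) = B + 1 := by
    refine ⟨(j - 1) / (k + 1) - 1, ?_⟩
    have := (Nat.le_div_iff_mul_le (by omega : 0 < k + 1)).2 (by omega : 1 * (k+1) ≤ j - 1)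
    omega
  set D := k + 1 with hDdef
  set r := (i - 1) % D with hrdef
  set s := (j - 1) % D with hsdef
  have hia : i - 1 = D * (A + 1) + r := by
    rw [← hA]
    exact (Nat.div_add_mod _ _).symm
  have hjb : j - 1 = D * (B + 1) + s := by
    rw [← hB]
    exact (Nat.div_add_mod _ _).symm
  have hr : r < D := Nat.mod_lt _ (by omega)
  have hs : s < D := Nat.mod_lt _ (by omega)
  have hM : ((i - 1) * (j - 1) - r * s) / D = (B+1)*(D*(A+1)+r) + (A+1)*s := by
    have key : (D*(A+1) + r) * (D*(B+1) + s)
        = D * ((B+1) * (D*(A+1) + r) + (A+1) * s) + r * s := by ring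
    rw [hia, hjb, key, Nat.add_sub_cancel, Nat.mul_div_cancel_left _ (show 0 < D by omega)]
  rw [hM]
  have hcard : Fintype.card (ETy D r s A (A*D + r) B) = (B+1)*(D*(A+1)+r) + (A+1)*s := by
    rw [card_E]
    ring
  have e : Fin ((B+1)*(D*(A+1)+r) + (A+1)*s) ≃ ETy D r s A (A*D+r) B :=
    Fintype.equivOfCardEq (by rw [Fintype.card_fin, hcard])
  refine ⟨(EG D r s A (A*D+r) B).comap ⇑e, ?_, ?_, ?_⟩
  · exact cograph_of_inj ⇑e e.injective (fun u v => Iff.rfl) (cograph_E _ _ _ _ _ _)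
  · rintro ⟨S, hScard, hSdense⟩
    have hSdense' : KSparse ((EG D r s A (A*D+r) B).comap ⇑e)ᶜ k S := hSdense
    rw [compl_comap_equiv] at hSdense'
    have himg : KSparse (EG D r s A (A*D+r) B)ᶜ k (⇑e '' S) :=
      ksparse_image ⇑e e.injective (fun u _ v _ => Iff.rfl) hSdense'
    have hbound := DN_E (k := k) (D := D) (r := r) (s := s) (ai := A) (q := A*D+r)
      hDdef rfl B k le_rfl _ himg
    rw [Set.ncard_image_of_injective _ e.injective, hScard] at hbound
    have hbound' : i ≤ A*D + r + k + 1 := hbound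
    have h1 : A*D = D*A := mul_comm _ _
    have h2 : D*(A+1) = D*A + D := by ring
    omega
  · rintro ⟨S, hScard, hSsparse⟩
    have himg : KSparse (EG D r s A (A*D+r) B) k (⇑e '' S) :=
      ksparse_image ⇑e e.injective (fun u _ v _ => Iff.rfl) hSsparse
    have hbound := SP_E (k := k) (D := D) (r := r) (s := s) (ai := A) (q := A*D+r)
      hDdef (by omega) B k le_rfl _ himg
    rw [Set.ncard_image_of_injective _ e.injective, hScard] at hbound
    have hbound' : j ≤ (D + s) + B*D := hbound
    have h1 : B*D = D*B := mul_comm _ _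
    have h2 : D*(B+1) = D*B + D := by ring
    omega

end DR

namespace DR

section Seinsche
variable {V : Type*}

/-- `G` can be split into two nonempty parts with no edges in between. -/
def Split (G : SimpleGraph V) : Prop :=
  ∃ A : Set V, A.Nonempty ∧ Aᶜ.Nonempty ∧ ∀ a ∈ A, ∀ b ∈ Aᶜ, ¬ G.Adj a b

lemma preconn_of_not_split {G : SimpleGraph V} (h : ¬ Split G) (u w : V) :
    Relation.ReflTransGen G.Adj u w := by
  by_contra hc
  apply h
  refine ⟨{z | Relation.ReflTransGen G.Adj u z}, ⟨u, Relation.ReflTransGen.refl⟩, ⟨w, hc⟩, ?_⟩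
  intro a ha b hb hab
  exact hb (ha.tail hab)

/-- connectivity within a set of vertices -/
def Conn (G : SimpleGraph V) (W : Set V) (x y : V) : Prop :=
  Relation.ReflTransGen (fun p q => p ∈ W ∧ q ∈ W ∧ G.Adj p q) x y

lemma conn_symm {G : SimpleGraph V} {W : Set V} {x y : V} (h : Conn G W x y) :
    Conn G W y x := by
  haveI : Std.Symm (fun p q : V => p ∈ W ∧ q ∈ W ∧ G.Adj p q) :=
    ⟨by rintro p q ⟨h1, h2, h3⟩; exact ⟨h2, h1, h3.symm⟩⟩
  exact (Relation.ReflTransGen.stdSymm (r := fun p q : V => p ∈ W ∧ q ∈ W ∧ G.Adj p q)).symm _ _ h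

lemma conn_trans {G : SimpleGraph V} {W : Set V} {x y z : V}
    (h1 : Conn G W x y) (h2 : Conn G W y z) : Conn G W x z := h1.trans h2

lemma conn_mem {G : SimpleGraph V} {W : Set V} {x y : V} (h : Conn G W x y) :
    x = y ∨ (x ∈ W ∧ y ∈ W) := by
  induction h with
  | refl => exact Or.inl rfl
  | tail h' step ih =>
    rcases ih with rfl | ⟨hx, _⟩
    · exact Or.inr ⟨step.1, step.2.1⟩
    · exact Or.inr ⟨hx, step.2.1⟩

/-- Following a walk to `v`, either we stay in the component of `x` in `V \ {v}`,
or we find a neighbor of `v` in that component. -/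
lemma reach_comp {G : SimpleGraph V} {v x : V} (hx : x ≠ v)
    (hpre : Relation.ReflTransGen G.Adj x v) :
    ∃ a, Conn G {v}ᶜ x a ∧ G.Adj v a := by
  have main : ∀ w, Relation.ReflTransGen G.Adj x w →
      (Conn G {v}ᶜ x w ∧ w ≠ v) ∨ ∃ a, Conn G {v}ᶜ x a ∧ G.Adj v a := by
    intro w hw
    induction hw with
    | refl => exact Or.inl ⟨Relation.ReflTransGen.refl, hx⟩
    | @tail b c h' step ih =>
      rcases ih with ⟨hconn, hbne⟩ | h
      · by_cases hc : c = v
        · subst hc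
          exact Or.inr ⟨b, hconn, step.symm⟩
        · exact Or.inl ⟨hconn.tail ⟨hbne, hc, step⟩, hc⟩
      · exact Or.inr h
  rcases main v hpre with ⟨_, hne⟩ | h
  · exact absurd rfl hne
  · exact h

/-- first crossing: along a walk in `V \ {v}` from a non-neighbor of `v` to a neighbor
of `v`, there is an edge `p q` with `p` non-adjacent and `q` adjacent to `v`. -/
lemma first_cross {G : SimpleGraph V} {v b₀ : V} (hb : ¬ G.Adj v b₀) :
    ∀ w, Conn G {v}ᶜ b₀ w → G.Adj v w →
    ∃ p q, Conn G {v}ᶜ b₀ p ∧ Conn G {v}ᶜ b₀ q ∧ G.Adj p q ∧ ¬ G.Adj v p ∧ G.Adj v q := by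
  intro w hconn
  induction hconn with
  | refl => intro h; exact absurd h hb
  | @tail b c h' step ih =>
    intro hadjvc
    by_cases h : G.Adj v b
    · exact ih h
    · exact ⟨b, c, h', h'.tail step, step.2.2, h, hadjvc⟩

/-- building an induced `P₄` from a path `p - q - v - w` with the right
non-adjacencies. -/
lemma build_p4 {G : SimpleGraph V} {p q v w : V}
    (hpq : G.Adj p q) (hqv : G.Adj q v) (hvw : G.Adj v w)
    (hpv : ¬ G.Adj p v) (hpw : ¬ G.Adj p w) (hqw : ¬ G.Adj q w)
    (hpv' : p ≠ v) (hpw' : p ≠ w) (hqw' : q ≠ w) :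
    ∃ f : Fin 4 ↪ V, ∀ a b : Fin 4, G.Adj (f a) (f b) ↔ (pathGraph 4).Adj a b := by
  have hirr : ∀ z : V, ¬ G.Adj z z := fun z => G.irrefl
  have hqp := hpq.symm
  have hvq := hqv.symm
  have hwv := hvw.symm
  have hvp : ¬ G.Adj v p := fun h => hpv h.symm
  have hwp : ¬ G.Adj w p := fun h => hpw h.symm
  have hwq : ¬ G.Adj w q := fun h => hqw h.symm
  have hinj : Function.Injective (![p, q, v, w]) := by
    intro s t hst
    fin_cases s <;> fin_cases t <;> first
      | rfl
      | (exfalso; simp only [Matrix.cons_val_zero, Matrix.cons_val_one, Matrix.head_cons,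
          Matrix.cons_val_two, Matrix.tail_cons, Matrix.cons_val_three] at hst;
         first
           | exact hpq.ne hst | exact hpq.ne hst.symm
           | exact hqv.ne hst | exact hqv.ne hst.symm
           | exact hvw.ne hst | exact hvw.ne hst.symm
           | exact hpv' hst | exact hpv' hst.symm
           | exact hpw' hst | exact hpw' hst.symm
           | exact hqw' hst | exact hqw' hst.symm)
  refine ⟨⟨![p, q, v, w], hinj⟩, fun a b => ?_⟩
  fin_cases a <;> fin_cases b <;>
    simp [path4_iff, hpq, hqv, hvw, hpv, hpw, hqw, hqp, hvq, hwv, hvp, hwp, hwq, hirr] <;>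
    decide

/-- the key construction: if `G` and `Gᶜ` are preconnected but removing some vertex `v`
disconnects `G`, then `G` contains an induced `P₄`. -/
lemma P4_of_disconn {G : SimpleGraph V}
    (hG : ∀ u w : V, Relation.ReflTransGen G.Adj u w)
    (hG' : ∀ u w : V, Relation.ReflTransGen Gᶜ.Adj u w)
    (v x y : V) (hx : x ≠ v) (hy : y ≠ v)
    (hxy : ¬ Conn G {v}ᶜ x y) :
    ∃ f : Fin 4 ↪ V, ∀ a b : Fin 4, G.Adj (f a) (f b) ↔ (pathGraph 4).Adj a b := by
  obtain ⟨a, hconn_a, hva⟩ := reach_comp hx (hG x v)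
  obtain ⟨a', hconn_a', hva'⟩ := reach_comp hy (hG y v)
  -- non-neighbor of v
  obtain ⟨b₀, hvb₀, hb₀ne⟩ : ∃ b₀, ¬ G.Adj v b₀ ∧ b₀ ≠ v := by
    rcases (hG' v x).cases_head with h | ⟨c, hc, _⟩
    · exact absurd h.symm hx
    · exact ⟨c, hc.2, fun h => Gᶜ.irrefl (h ▸ hc)⟩
  obtain ⟨a₁, hconn_a₁, hva₁⟩ := reach_comp hb₀ne (hG b₀ v)
  obtain ⟨p, q, hKp, hKq, hpq, hvp, hvq⟩ := first_cross hvb₀ a₁ hconn_a₁ hva₁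
  have hdisj : ¬ (Conn G {v}ᶜ b₀ a ∧ Conn G {v}ᶜ b₀ a') := by
    rintro ⟨h1, h2⟩
    exact hxy (conn_trans (conn_trans hconn_a (conn_symm h1)) (conn_trans h2 (conn_symm hconn_a')))
  obtain ⟨w, hvw, hw_notK⟩ : ∃ z, G.Adj v z ∧ ¬ Conn G {v}ᶜ b₀ z := by
    by_cases h : Conn G {v}ᶜ b₀ a
    · exact ⟨a', hva', fun hc => hdisj ⟨h, hc⟩⟩
    · exact ⟨a, hva, h⟩
  -- distinctness and non-adjacency facts
  have hKp_ne_v : p ≠ v := by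
    rcases conn_mem hKp with rfl | ⟨_, hp⟩
    · exact hb₀ne
    · exact hp
  have hKq_ne_v : q ≠ v := hvq.ne'
  have hw_ne_v : w ≠ v := hvw.ne'
  have hp_w_ne : p ≠ w := by rintro rfl; exact hw_notK hKp
  have hq_w_ne : q ≠ w := by rintro rfl; exact hw_notK hKq
  have hp_w : ¬ G.Adj p w := by
    intro h
    exact hw_notK (hKp.tail ⟨hKp_ne_v, hw_ne_v, h⟩)
  have hq_w : ¬ G.Adj q w := by
    intro h
    exact hw_notK (hKq.tail ⟨hKq_ne_v, hw_ne_v, h⟩)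
  exact build_p4 hpq hvq.symm hvw (fun h => hvp h.symm) hp_w hq_w hKp_ne_v hp_w_ne hq_w_ne

lemma compl_induce (G : SimpleGraph V) (W : Set V) :
    (G.induce W)ᶜ = Gᶜ.induce W := by
  ext a b
  constructor
  · rintro ⟨h1, h2⟩
    exact ⟨Subtype.coe_injective.ne h1, h2⟩
  · rintro ⟨h1, h2⟩
    exact ⟨fun h => h1 (congrArg _ h), h2⟩

lemma conn_to_induce {G : SimpleGraph V} {W : Set V} (x : ↥W) :
    ∀ (w : V) (hw : w ∈ W), Conn G W ↑x w →
      Relation.ReflTransGen (G.induce W).Adj x ⟨w, hw⟩ := by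
  intro w hw hconn
  induction hconn with
  | refl => exact Relation.ReflTransGen.refl
  | @tail b c h' step ih =>
    exact (ih step.1).tail step.2.2

lemma p4_compl_transfer {G : SimpleGraph V}
    (h : ∃ f : Fin 4 ↪ V, ∀ a b : Fin 4, Gᶜ.Adj (f a) (f b) ↔ (pathGraph 4).Adj a b) :
    ∃ f : Fin 4 ↪ V, ∀ a b : Fin 4, G.Adj (f a) (f b) ↔ (pathGraph 4).Adj a b := by
  by_contra hc
  exact (cograph_compl hc) h

end Seinsche
end DR

namespace DR

open Classical in
theorem seinsche : ∀ (n : ℕ) (V : Type) [Fintype V] (G : SimpleGraph V),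
    Fintype.card V = n → 2 ≤ n →
    (∀ u w : V, Relation.ReflTransGen G.Adj u w) →
    (∀ u w : V, Relation.ReflTransGen Gᶜ.Adj u w) →
    ∃ f : Fin 4 ↪ V, ∀ a b : Fin 4, G.Adj (f a) (f b) ↔ (pathGraph 4).Adj a b := by
  intro n
  induction n using Nat.strong_induction_on with
  | _ n IH =>
    intro V _ G hcard h2 hG hG'
    by_cases hsp : ∃ (v x y : V), x ≠ v ∧ y ≠ v ∧ ¬ Conn G {v}ᶜ x y
    · obtain ⟨v, x, y, hx, hy, hxy⟩ := hsp
      exact P4_of_disconn hG hG' v x y hx hy hxy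
    by_cases hsp' : ∃ (v x y : V), x ≠ v ∧ y ≠ v ∧ ¬ Conn Gᶜ {v}ᶜ x y
    · obtain ⟨v, x, y, hx, hy, hxy⟩ := hsp'
      exact p4_compl_transfer
        (P4_of_disconn hG' (by rw [compl_compl]; exact hG) v x y hx hy hxy)
    push_neg at hsp hsp'
    have hne : Nonempty V := Fintype.card_pos_iff.mp (by omega)
    obtain ⟨v⟩ := hne
    rcases Nat.lt_or_ge n 3 with h3 | h3
    · exfalso
      obtain ⟨u, hu⟩ : ∃ u : V, u ≠ v :=
        Fintype.exists_ne_of_one_lt_card (by omega) v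
      obtain ⟨c, hc, -⟩ : ∃ c, G.Adj v c ∧ Relation.ReflTransGen G.Adj c u := by
        rcases (hG v u).cases_head with h | h
        · exact absurd h.symm hu
        · exact h
      obtain ⟨c', hc', -⟩ : ∃ c', Gᶜ.Adj v c' ∧ Relation.ReflTransGen Gᶜ.Adj c' u := by
        rcases (hG' v u).cases_head with h | h
        · exact absurd h.symm hu
        · exact h
      have hcv : c ≠ v := hc.ne'
      have hc'v : c' ≠ v := hc'.ne'
      have hcc' : c = c' := by
        by_contra hne'
        have h33 : ({v, c, c'} : Finset V).card = 3 :=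
          Finset.card_eq_three.mpr ⟨v, c, c', hcv.symm, hc'v.symm, hne', rfl⟩
        have := Finset.card_le_univ ({v, c, c'} : Finset V)
        rw [h33] at this
        omega
      exact hc'.2 (hcc' ▸ hc)
    · -- recurse on V \ {v}
      have hcards : Fintype.card ↥({v}ᶜ : Set V) = n - 1 := by
        rw [Fintype.card_compl_set, Set.card_singleton, hcard]
      have hpre : ∀ x y : ↥({v}ᶜ : Set V),
          Relation.ReflTransGen (G.induce {v}ᶜ).Adj x y := by
        intro x y
        have hconn := hsp v ↑x ↑y x.2 y.2
        exact conn_to_induce x ↑y y.2 hconn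
      have hpre' : ∀ x y : ↥({v}ᶜ : Set V),
          Relation.ReflTransGen (G.induce {v}ᶜ)ᶜ.Adj x y := by
        intro x y
        rw [compl_induce]
        have hconn := hsp' v ↑x ↑y x.2 y.2
        exact conn_to_induce x ↑y y.2 hconn
      obtain ⟨f, hf⟩ := IH (n-1) (by omega) ↥({v}ᶜ : Set V) (G.induce {v}ᶜ)
        hcards (by omega) hpre hpre'
      exact ⟨f.trans (Function.Embedding.subtype _), fun a b => hf a b⟩

/-- every cograph on at least two vertices splits, or its complement splits. -/
lemma split_or_split_compl {V : Type} [Fintype V] (G : SimpleGraph V)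
    (hcog : IsCograph G) (h2 : 2 ≤ Fintype.card V) : Split G ∨ Split Gᶜ := by
  by_contra h
  push_neg at h
  exact hcog (seinsche (Fintype.card V) V G rfl h2
    (preconn_of_not_split h.1) (preconn_of_not_split h.2))

end DR

namespace DR

def Mf (k i j : ℕ) : ℕ := ((i-1)*(j-1) - (i-1)%(k+1) * ((j-1)%(k+1)))/(k+1)

def Phi (k i m : ℕ) : ℕ :=
  ((m-1)/(i-1))*(k+1) + min k (((m-1)%(i-1)) / ((i-1)/(k+1))) + 1

lemma Mf_comm (k i j : ℕ) : Mf k i j = Mf k j i := by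
  unfold Mf
  rw [mul_comm (i-1) (j-1), mul_comm ((i-1)%(k+1)) ((j-1)%(k+1))]

lemma Mf_eq {k i j : ℕ} (hi : k+2 ≤ i) (hj : k+2 ≤ j) :
    Mf k i j = ((j-1)/(k+1))*(i-1) + ((i-1)/(k+1))*((j-1)%(k+1)) := by
  unfold Mf
  set D := k + 1 with hD
  set a := (i-1)/D with haD
  set r := (i-1)%D with hrD
  set b := (j-1)/D with hbD
  set s := (j-1)%D with hsD
  have hia : i - 1 = D * a + r := (Nat.div_add_mod _ _).symm
  have hjb : j - 1 = D * b + s := (Nat.div_add_mod _ _).symm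
  have key : (D*a + r) * (D*b + s) = D * (b * (D*a + r) + a * s) + r * s := by ring
  rw [hia, hjb, key, Nat.add_sub_cancel, Nat.mul_div_cancel_left _ (show 0 < D by omega)]

lemma div_ge_one {D m : ℕ} (hD : 0 < D) (h : D ≤ m) : 1 ≤ m / D :=
  (Nat.le_div_iff_mul_le hD).2 (by omega)

lemma Mf_ge {k i j : ℕ} (hi : k+2 ≤ i) (hj : k+2 ≤ j) : k + 1 ≤ Mf k i j := by
  rw [Mf_eq hi hj]
  have hb : 1 ≤ (j-1)/(k+1) := div_ge_one (by omega) (by omega)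
  have : 1 * (i-1) ≤ ((j-1)/(k+1)) * (i-1) := Nat.mul_le_mul_right _ hb
  omega

lemma Phi_pos (k i m : ℕ) : 1 ≤ Phi k i m := Nat.succ_le_succ (Nat.zero_le _)

lemma Phi_le {k i m : ℕ} (hi : k+2 ≤ i) (hm : 1 ≤ m) : Phi k i m ≤ m := by
  unfold Phi
  set b' := (m-1)/(i-1) with hb'
  set ρ := (m-1)%(i-1) with hρ
  have hm1 : m - 1 = (i-1) * b' + ρ := (Nat.div_add_mod _ _).symm
  have h1 : b' * (k+1) ≤ b' * (i-1) := Nat.mul_le_mul_left _ (by omega)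
  have h2 : min k (ρ / ((i-1)/(k+1))) ≤ ρ := le_trans (min_le_right _ _) (Nat.div_le_self _ _)
  have h3 : b' * (i-1) = (i-1) * b' := mul_comm _ _
  omega

lemma Mf_Phi_le {k i m : ℕ} (hi : k+2 ≤ i) (hm : 1 ≤ m)
    (h : k+2 ≤ Phi k i m) : Mf k i (Phi k i m) + 1 ≤ m := by
  have heq := Mf_eq hi h
  set b' := (m-1)/(i-1) with hb'
  set ρ := (m-1)%(i-1) with hρ
  set s' := min k (ρ / ((i-1)/(k+1))) with hs'
  have hPhi : Phi k i m = b' * (k+1) + s' + 1 := rfl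
  have hsk : s' < k + 1 := by
    have := min_le_left k (ρ / ((i-1)/(k+1))); omega
  have hdiv : (Phi k i m - 1) / (k+1) = b' := by
    rw [hPhi]
    simp only [Nat.add_sub_cancel]
    rw [mul_comm b' (k+1), Nat.mul_add_div (by omega), Nat.div_eq_of_lt hsk]
    omega
  have hmod : (Phi k i m - 1) % (k+1) = s' := by
    rw [hPhi]
    simp only [Nat.add_sub_cancel]
    rw [mul_comm b' (k+1), Nat.mul_add_mod, Nat.mod_eq_of_lt hsk]
  rw [heq, hdiv, hmod]
  have hm1 : m - 1 = (i-1) * b' + ρ := (Nat.div_add_mod _ _).symm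
  have h3 : b' * (i-1) = (i-1) * b' := mul_comm _ _
  have h4 : ((i-1)/(k+1)) * s' ≤ ρ := by
    have h5 : s' ≤ ρ / ((i-1)/(k+1)) := min_le_right _ _
    have h6 : ((i-1)/(k+1)) * s' ≤ ((i-1)/(k+1)) * (ρ / ((i-1)/(k+1))) :=
      Nat.mul_le_mul_left _ h5
    have h7 : ((i-1)/(k+1)) * (ρ / ((i-1)/(k+1))) ≤ ρ := Nat.mul_div_le _ _
    omega
  omega

end DR

namespace DR

/-- abstract core of the superadditivity claim -/
lemma claimA_abstract (k D N a r b s b₁ ρ₁ b₂ ρ₂ q₁ q₂ : ℕ)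
    (hD : D = k + 1)
    (hN : N = a*D + r) (hr : r < D) (ha : 1 ≤ a)
    (hb : 1 ≤ b) (hs : s < D)
    (hρ₁ : ρ₁ < N) (hρ₂ : ρ₂ < N)
    (hq₁l : a*q₁ ≤ ρ₁) (hq₁u : ρ₁ < a*q₁ + a)
    (hq₂l : a*q₂ ≤ ρ₂) (hq₂u : ρ₂ < a*q₂ + a)
    (hx : b*N + a*s ≤ b₁*N + ρ₁ + (b₂*N + ρ₂) + 1) :
    b*D + s + 1 ≤ (b₁*D + min k q₁ + 1) + (b₂*D + min k q₂ + 1) := by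
  have haD : D ≤ a*D := Nat.le_mul_of_pos_left D ha
  have hN1 : 1 ≤ N := by omega
  rcases le_or_gt (b+1) (b₁+b₂) with hT | hT
  · -- many blocks: done
    have h1 : (b+1)*D ≤ (b₁+b₂)*D := Nat.mul_le_mul_right D hT
    have h2 : (b+1)*D = b*D + D := by ring
    have h3 : (b₁+b₂)*D = b₁*D + b₂*D := by ring
    omega
  rcases eq_or_lt_of_le (Nat.lt_succ_iff.mp hT) with hTb | hTb
  · -- T = b
    have hbn : b₁*N + b₂*N = b*N := by rw [← add_mul, hTb]
    have hbd : b₁*D + b₂*D = b*D := by rw [← add_mul, hTb]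
    have hsum : a*s ≤ ρ₁ + ρ₂ + 1 := by omega
    rcases le_or_gt k q₁ with hk1 | hk1
    · have : min k q₁ = k := min_eq_left hk1
      omega
    rcases le_or_gt k q₂ with hk2 | hk2
    · have : min k q₂ = k := min_eq_left hk2
      omega
    have hm1 : min k q₁ = q₁ := min_eq_right (le_of_lt hk1)
    have hm2 : min k q₂ = q₂ := min_eq_right (le_of_lt hk2)
    have hkey : a*s < a*(q₁+q₂+2) := by
      have : a*(q₁+q₂+2) = a*q₁ + a*q₂ + 2*a := by ring
      omega
    have := Nat.lt_of_mul_lt_mul_left hkey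
    omega
  · -- T < b, i.e. T+1 ≤ b
    have hT1 : b₁ + b₂ + 1 ≤ b := hTb
    rcases eq_or_lt_of_le hT1 with hTb1 | hTb1
    · -- T + 1 = b
      have hbn : b₁*N + b₂*N + N = b*N := by rw [← hTb1]; ring
      have hbd : b₁*D + b₂*D + D = b*D := by rw [← hTb1]; ring
      have hsum : N + a*s ≤ ρ₁ + ρ₂ + 1 := by omega
      rcases le_or_gt k q₁ with hk1 | hk1
      · rcases le_or_gt k q₂ with hk2 | hk2
        · have e1 : min k q₁ = k := min_eq_left hk1
          have e2 : min k q₂ = k := min_eq_left hk2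
          omega
        · have e1 : min k q₁ = k := min_eq_left hk1
          have e2 : min k q₂ = q₂ := min_eq_right (le_of_lt hk2)
          -- need s ≤ q₂
          have h5 : a*s ≤ ρ₂ := by omega
          have h6 : a*s < a*(q₂+1) := by
            have : a*(q₂+1) = a*q₂ + a := by ring
            omega
          have := Nat.lt_of_mul_lt_mul_left h6
          omega
      · rcases le_or_gt k q₂ with hk2 | hk2
        · have e1 : min k q₁ = q₁ := min_eq_right (le_of_lt hk1)
          have e2 : min k q₂ = k := min_eq_left hk2
          have h5 : a*s ≤ ρ₁ := by omega
          have h6 : a*s < a*(q₁+1) := by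
            have : a*(q₁+1) = a*q₁ + a := by ring
            omega
          have := Nat.lt_of_mul_lt_mul_left h6
          omega
        · have e1 : min k q₁ = q₁ := min_eq_right (le_of_lt hk1)
          have e2 : min k q₂ = q₂ := min_eq_right (le_of_lt hk2)
          -- need q₁ + q₂ ≥ k + s
          have h5 : a*(D+s) < a*(q₁+q₂+2) := by
            have e3 : a*(q₁+q₂+2) = a*q₁ + a*q₂ + 2*a := by ring
            have e4 : a*(D+s) = a*D + a*s := by ring
            omega
          have := Nat.lt_of_mul_lt_mul_left h5
          omega
    · -- T + 2 ≤ b : contradiction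
      exfalso
      have h1 : (b₁+b₂+2)*N ≤ b*N := Nat.mul_le_mul_right N hTb1
      have h2 : (b₁+b₂+2)*N = b₁*N + b₂*N + 2*N := by ring
      omega

/-- intermediate form with explicit names for the div/mod quantities -/
lemma claimA_mid (k i j x y a r b s b₁ ρ₁ q₁ b₂ ρ₂ q₂ : ℕ)
    (hi : k+2 ≤ i) (hj : k+2 ≤ j) (hx : 1 ≤ x) (hy : 1 ≤ y)
    (hsum : Mf k i j + 1 ≤ x + y)
    (hadef : (i-1)/(k+1) = a) (hrdef : (i-1)%(k+1) = r)
    (hbdef : (j-1)/(k+1) = b) (hsdef : (j-1)%(k+1) = s)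
    (hb1 : (x-1)/(i-1) = b₁) (hr1 : (x-1)%(i-1) = ρ₁) (hq1 : ρ₁ / a = q₁)
    (hb2 : (y-1)/(i-1) = b₂) (hr2 : (y-1)%(i-1) = ρ₂) (hq2 : ρ₂ / a = q₂) :
    j ≤ (b₁*(k+1) + min k q₁ + 1) + (b₂*(k+1) + min k q₂ + 1) := by
  have hi1 : 0 < i - 1 := by omega
  have hia : i - 1 = a*(k+1) + r := by
    rw [← hadef, ← hrdef]
    exact (Nat.div_add_mod' _ _).symm
  have hjb : j - 1 = b*(k+1) + s := by
    rw [← hbdef, ← hsdef]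
    exact (Nat.div_add_mod' _ _).symm
  have hr : r < k+1 := by rw [← hrdef]; exact Nat.mod_lt _ (by omega)
  have hs : s < k+1 := by rw [← hsdef]; exact Nat.mod_lt _ (by omega)
  have ha : 1 ≤ a := by rw [← hadef]; exact div_ge_one (by omega) (by omega)
  have hb : 1 ≤ b := by rw [← hbdef]; exact div_ge_one (by omega) (by omega)
  have hρ₁ : ρ₁ < i - 1 := by rw [← hr1]; exact Nat.mod_lt _ hi1
  have hρ₂ : ρ₂ < i - 1 := by rw [← hr2]; exact Nat.mod_lt _ hi1
  have hq₁l : a*q₁ ≤ ρ₁ := by rw [← hq1]; exact Nat.mul_div_le _ _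
  have hq₁u : ρ₁ < a*q₁ + a := by
    rw [← hq1]
    have h1 := Nat.div_add_mod ρ₁ a
    have h2 : ρ₁ % a < a := Nat.mod_lt _ (by omega)
    omega
  have hq₂l : a*q₂ ≤ ρ₂ := by rw [← hq2]; exact Nat.mul_div_le _ _
  have hq₂u : ρ₂ < a*q₂ + a := by
    rw [← hq2]
    have h1 := Nat.div_add_mod ρ₂ a
    have h2 : ρ₂ % a < a := Nat.mod_lt _ (by omega)
    omega
  have hMf : Mf k i j = b*(i-1) + a*s := by rw [Mf_eq hi hj, hadef, hbdef, hsdef]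
  have hxi : b*(i-1) + a*s ≤ b₁*(i-1) + ρ₁ + (b₂*(i-1) + ρ₂) + 1 := by
    have e1 : x - 1 = (i-1)*b₁ + ρ₁ := by
      rw [← hb1, ← hr1]
      exact (Nat.div_add_mod _ _).symm
    have e2 : y - 1 = (i-1)*b₂ + ρ₂ := by
      rw [← hb2, ← hr2]
      exact (Nat.div_add_mod _ _).symm
    have c1 : (i-1)*b₁ = b₁*(i-1) := mul_comm _ _
    have c2 : (i-1)*b₂ = b₂*(i-1) := mul_comm _ _
    omega
  have key := claimA_abstract k (k+1) (i-1) a r b s b₁ ρ₁ b₂ ρ₂ q₁ q₂ rfl hia hr ha hb hs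
    hρ₁ hρ₂ hq₁l hq₁u hq₂l hq₂u hxi
  omega

/-- the superadditivity claim in terms of `Phi` and `Mf`. -/
lemma claimA {k i j x y : ℕ} (hi : k+2 ≤ i) (hj : k+2 ≤ j)
    (hx : 1 ≤ x) (hy : 1 ≤ y) (hsum : Mf k i j + 1 ≤ x + y) :
    j ≤ Phi k i x + Phi k i y :=
  claimA_mid k i j x y _ _ _ _ _ _ _ _ _ _ hi hj hx hy hsum
    rfl rfl rfl rfl rfl rfl rfl rfl rfl rfl

end DR

namespace DR

lemma core (n : ℕ)
    (IH : ∀ m : ℕ, m < n → ∀ (V : Type) [inst : Fintype V] (G : SimpleGraph V) (k i j : ℕ),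
      Fintype.card V = m → IsCograph G → k+2 ≤ i → k+2 ≤ j → Mf k i j + 1 ≤ m →
      HasKDense G k i ∨ HasKSparse G k j)
    (V : Type) [Fintype V] (G : SimpleGraph V) (k i j : ℕ)
    (hcard : Fintype.card V = n) (hcog : IsCograph G) (hi : k+2 ≤ i) (hj : k+2 ≤ j)
    (hn : Mf k i j + 1 ≤ n) (hsplit : Split G) :
    HasKDense G k i ∨ HasKSparse G k j := by
  obtain ⟨A, hA, hAc, hnoedge⟩ := hsplit
  have part : ∀ B : Set V, B.Nonempty → Bᶜ.Nonempty →
      HasKDense G k i ∨ ∃ S : Set V, S ⊆ B ∧ S.ncard = Phi k i B.ncard ∧ KSparse G k S := by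
    intro B hB hBc
    have hB1 : 1 ≤ B.ncard := (Set.ncard_pos (Set.toFinite _)).2 hB
    by_cases hPhi : Phi k i B.ncard ≤ k + 1
    · right
      obtain ⟨S, hSB, hScard⟩ := Set.exists_subset_card_eq (Phi_le hi hB1)
      exact ⟨S, hSB, hScard, ksparse_of_small (Set.toFinite _) (by omega)⟩
    · push_neg at hPhi
      haveI : Fintype ↥B := (Set.toFinite B).fintype
      have hm : Fintype.card ↥B = B.ncard := by
        rw [← Nat.card_coe_set_eq, Nat.card_eq_fintype_card]
      have hmlt : B.ncard < n := by
        have hsum := Set.ncard_add_ncard_compl B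
        rw [Nat.card_eq_fintype_card, hcard] at hsum
        have : 1 ≤ Bᶜ.ncard := (Set.ncard_pos (Set.toFinite _)).2 hBc
        omega
      have hcogB : IsCograph (G.induce B) :=
        cograph_of_inj Subtype.val Subtype.coe_injective (fun u v => Iff.rfl) hcog
      rcases IH B.ncard hmlt ↥B (G.induce B) k i (Phi k i B.ncard) hm hcogB hi (by omega)
        (Mf_Phi_le hi hB1 (by omega)) with hdense | hsparse
      · left
        obtain ⟨S, hScard, hSd⟩ := hdense
        have hSd' : KSparse (Gᶜ.induce B) k S := by rw [← compl_induce]; exact hSd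
        refine ⟨Subtype.val '' S, ?_, ?_⟩
        · rw [Set.ncard_image_of_injective _ Subtype.coe_injective]; exact hScard
        · exact ksparse_image Subtype.val Subtype.coe_injective (fun u _ v _ => Iff.rfl) hSd'
      · right
        obtain ⟨S, hScard, hSs⟩ := hsparse
        refine ⟨Subtype.val '' S, ?_, ?_, ?_⟩
        · rintro x ⟨u, _, rfl⟩; exact u.2
        · rw [Set.ncard_image_of_injective _ Subtype.coe_injective]; exact hScard
        · exact ksparse_image Subtype.val Subtype.coe_injective (fun u _ v _ => Iff.rfl) hSs
  rcases part A hA hAc with hd | ⟨SA, hSA_sub, hSA_card, hSA_sp⟩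
  · exact Or.inl hd
  rcases part Aᶜ hAc (by rwa [compl_compl]) with hd | ⟨SB, hSB_sub, hSB_card, hSB_sp⟩
  · exact Or.inl hd
  right
  have hdisj : Disjoint SA SB :=
    Set.disjoint_of_subset hSA_sub hSB_sub disjoint_compl_right
  have hunion_sp : KSparse G k (SA ∪ SB) := by
    intro v hv
    rcases hv with hvA | hvB
    · have hset : {u ∈ SA ∪ SB | G.Adj v u} = {u ∈ SA | G.Adj v u} := by
        ext u
        constructor
        · rintro ⟨hu | hu, hadj⟩
          · exact ⟨hu, hadj⟩
          · exact absurd hadj (hnoedge v (hSA_sub hvA) u (hSB_sub hu))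
        · rintro ⟨hu, hadj⟩; exact ⟨Or.inl hu, hadj⟩
      rw [hset]; exact hSA_sp v hvA
    · have hset : {u ∈ SA ∪ SB | G.Adj v u} = {u ∈ SB | G.Adj v u} := by
        ext u
        constructor
        · rintro ⟨hu | hu, hadj⟩
          · exact absurd hadj.symm (hnoedge u (hSA_sub hu) v (hSB_sub hvB))
          · exact ⟨hu, hadj⟩
        · rintro ⟨hu, hadj⟩; exact ⟨Or.inr hu, hadj⟩
      rw [hset]; exact hSB_sp v hvB
  have hcards : (SA ∪ SB).ncard = Phi k i A.ncard + Phi k i Aᶜ.ncard := by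
    rw [Set.ncard_union_eq hdisj (Set.toFinite _) (Set.toFinite _), hSA_card, hSB_card]
  have hjle : j ≤ (SA ∪ SB).ncard := by
    rw [hcards]
    refine claimA hi hj ((Set.ncard_pos (Set.toFinite _)).2 hA)
      ((Set.ncard_pos (Set.toFinite _)).2 hAc) ?_
    have hsum := Set.ncard_add_ncard_compl A
    rw [Nat.card_eq_fintype_card, hcard] at hsum
    omega
  obtain ⟨S, hSsub, hScard⟩ := Set.exists_subset_card_eq hjle
  exact ⟨S, hScard, ksparse_mono (Set.toFinite _) hSsub hunion_sp⟩

theorem upper : ∀ (n : ℕ) (V : Type) [Fintype V] (G : SimpleGraph V) (k i j : ℕ),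
    Fintype.card V = n → IsCograph G → k+2 ≤ i → k+2 ≤ j → Mf k i j + 1 ≤ n →
    HasKDense G k i ∨ HasKSparse G k j := by
  intro n
  induction n using Nat.strong_induction_on with
  | _ n IH =>
    intro V _ G k i j hcard hcog hi hj hn
    have h2 : 2 ≤ Fintype.card V := by
      have := Mf_ge hi hj; omega
    rcases split_or_split_compl G hcog h2 with hs | hs
    · exact core n IH V G k i j hcard hcog hi hj hn hs
    · have hcog' : IsCograph Gᶜ := cograph_compl hcog
      have hn' : Mf k j i + 1 ≤ n := by rw [Mf_comm]; exact hn
      rcases core n IH V Gᶜ k j i hcard hcog' hj hi hn' hs with hd | hsp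
      · right
        obtain ⟨S, hcard', hS⟩ := hd
        exact ⟨S, hcard', (compl_compl G) ▸ hS⟩
      · left
        exact hsp

end DR

theorem stmt19 (k i j : ℕ) (hi : k + 2 ≤ i) (hj : k + 2 ≤ j) :
    (∀ G : SimpleGraph
        (Fin (1 + ((i - 1) * (j - 1) - (i - 1) % (k + 1) * ((j - 1) % (k + 1))) / (k + 1))),
        IsCograph G → HasKDense G k i ∨ HasKSparse G k j) ∧
    (∃ G : SimpleGraph
        (Fin (((i - 1) * (j - 1) - (i - 1) % (k + 1) * ((j - 1) % (k + 1))) / (k + 1))),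
        IsCograph G ∧ ¬ HasKDense G k i ∧ ¬ HasKSparse G k j) := by
  constructor
  · intro G hcog
    refine DR.upper _ _ G k i j (Fintype.card_fin _) hcog hi hj ?_
    show DR.Mf k i j + 1 ≤ _
    unfold DR.Mf
    omega
  · exact DR.lower_main k i j hi hj
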